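/- Let R be any ring. The following are equivalent: (1) every acyclic complex of injective left R-modules is totally acyclic; (2) for every acyclic complex X of left R-modules all of whose components are Gorenstein injective, every cycle module Z_n(X) is Gorenstein injective. -/

import Mathlib

open CategoryTheory

universe u

namespace TotallyAcyclicPaper

/-- An unbounded chain complex of left `R`-modules. -/
abbrev Cx (R : Type u) [Ring R] := ChainComplex (ModuleCat.{u} R) ℤ

/-- A complex is acyclic (exact) if it is exact at every degree. -/
def Acyclic (R : Type u) [Ring R] (C : Cx R) : Prop :=
  ∀ (n : ℤ) (x : C.X n), C.d n (n - 1) x = 0 → ∃ y : C.X (n + 1), C.d (n + 1) n y = x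

/-- The `n`-th cycle submodule `Z_n(C) = ker (d_n : C_n → C_{n-1})`. -/
def cycles (R : Type u) [Ring R] (C : Cx R) (n : ℤ) : Submodule R (C.X n) :=
  LinearMap.ker (C.d n (n - 1)).hom

/-- An acyclic complex of injective modules is totally acyclic if `Hom(E,-)` leaves it
exact for every injective module `E`. -/
def TotallyAcyclicInj (R : Type u) [Ring R] (C : Cx R) : Prop :=
  Acyclic R C ∧ (∀ n : ℤ, Module.Injective R (C.X n)) ∧
    ∀ (E : Type u) [AddCommGroup E] [Module R E], Module.Injective R E →
      ∀ (n : ℤ) (f : E →ₗ[R] C.X n), (∀ x : E, C.d n (n - 1) (f x) = 0) →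
        ∃ g : E →ₗ[R] C.X (n + 1), ∀ x : E, C.d (n + 1) n (g x) = f x

/-- A module is Gorenstein injective if it is a cycle of a totally acyclic complex of
injective modules. -/
def IsGorensteinInj (R : Type u) [Ring R] (M : Type u) [AddCommGroup M] [Module R M] :
    Prop :=
  ∃ C : Cx R, TotallyAcyclicInj R C ∧ ∃ n : ℤ, Nonempty (M ≃ₗ[R] cycles R C n)

section Prelim

variable {R : Type u} [Ring R]

/-- Factor a linear map through a surjection whose kernel it kills. -/
theorem factor_thru {A B C : Type u} [AddCommGroup A] [AddCommGroup B] [AddCommGroup C]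
    [Module R A] [Module R B] [Module R C] (π : A →ₗ[R] B) (hs : Function.Surjective π)
    (g : A →ₗ[R] C) (h : ∀ a, π a = 0 → g a = 0) :
    ∃ φ : B →ₗ[R] C, ∀ a, φ (π a) = g a := by
  have hle : LinearMap.ker π ≤ LinearMap.ker g := fun a ha => h a ha
  refine ⟨(((LinearMap.ker π).liftQ g hle).comp
    ((LinearMap.quotKerEquivOfSurjective π hs).symm : B →ₗ[R] A ⧸ LinearMap.ker π)), fun a => ?_⟩
  have h1 : (LinearMap.quotKerEquivOfSurjective π hs).symm (π a) =
      Submodule.Quotient.mk a := by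
    rw [LinearEquiv.symm_apply_eq]
    rfl
  simp [h1]

/-- Products of injective modules are injective. -/
theorem inj_prod {E F : Type u} [AddCommGroup E] [AddCommGroup F] [Module R E] [Module R F]
    (hE : Module.Injective R E) (hF : Module.Injective R F) :
    Module.Injective R (E × F) := by
  constructor
  intro X Y _ _ _ _ f hf g
  obtain ⟨h1, hh1⟩ := hE.out f hf ((LinearMap.fst R E F).comp g)
  obtain ⟨h2, hh2⟩ := hF.out f hf ((LinearMap.snd R E F).comp g)
  exact ⟨h1.prod h2, fun x => by simp [hh1 x, hh2 x, Prod.ext_iff]⟩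

/-- Build a `ℤ`-indexed chain complex from a family of maps `X (j+1) ⟶ X j`. -/
noncomputable def mkCx (X : ℤ → ModuleCat.{u} R) (d : ∀ j : ℤ, X (j + 1) ⟶ X j)
    (w : ∀ j : ℤ, d (j + 1) ≫ d j = 0) : Cx R where
  X := X
  d i j := if h : j + 1 = i then eqToHom (congrArg X h.symm) ≫ d j else 0
  shape i j hij := by
    rw [dif_neg]
    intro h
    exact hij h
  d_comp_d' i j k hij hjk := by
    simp only [ComplexShape.down_Rel] at hij hjk
    subst hij hjk
    simp only [dif_pos rfl, eqToHom_refl, Category.id_comp]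
    exact w k

@[simp] theorem mkCx_d (X : ℤ → ModuleCat.{u} R) (d : ∀ j : ℤ, X (j + 1) ⟶ X j)
    (w : ∀ j : ℤ, d (j + 1) ≫ d j = 0) (j : ℤ) :
    (mkCx X d w).d (j + 1) j = d j := by
  simp [mkCx]

theorem gi_congr {M N : Type u} [AddCommGroup M] [AddCommGroup N] [Module R M] [Module R N]
    (e : M ≃ₗ[R] N) (h : IsGorensteinInj R M) : IsGorensteinInj R N := by
  obtain ⟨C, hC, n, ⟨e'⟩⟩ := h
  exact ⟨C, hC, n, ⟨e.symm.trans e'⟩⟩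

end Prelim

section Core

variable {R : Type u} [Ring R]

/-- Elementwise `d ∘ d = 0`. -/
theorem d_d (C : Cx R) (i j k : ℤ) (x : C.X i) : C.d j k (C.d i j x) = 0 := by
  have h : (C.d i j ≫ C.d j k) x = 0 := by
    rw [C.d_comp_d]
    rfl
  exact h

theorem mkCx_d' (X : ℤ → ModuleCat.{u} R) (d : ∀ j : ℤ, X (j + 1) ⟶ X j)
    (w : ∀ j : ℤ, d (j + 1) ≫ d j = 0) {i j : ℤ} (h : j + 1 = i) :
    (mkCx X d w).d i j = eqToHom (congrArg X h.symm) ≫ d j := by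
  subst h; simp [mkCx]

theorem inj_subsingleton {E : Type u} [AddCommGroup E] [Module R E] [Subsingleton E] :
    Module.Injective R E :=
  ⟨fun _ _ _ _ _ _ f _ g => ⟨0, fun x => Subsingleton.elim _ _⟩⟩

variable (R) in
/-- The contractible complex `⋯ → E × E → E × E → ⋯` with `d (a,b) = (b,0)`. -/
noncomputable def giK (E : Type u) [AddCommGroup E] [Module R E] : Cx R :=
  mkCx (fun _ => ModuleCat.of R (E × E))
    (fun _ => ModuleCat.ofHom ((LinearMap.inl R E E).comp (LinearMap.snd R E E)))
    (fun j => by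
      ext p <;> rfl)

theorem giK_d (E : Type u) [AddCommGroup E] [Module R E] {i j : ℤ} (h : j + 1 = i) :
    (giK R E).d i j =
      ModuleCat.ofHom ((LinearMap.inl R E E).comp (LinearMap.snd R E E)) := by
  unfold giK
  rw [mkCx_d' _ _ _ h]
  simp
  rfl

theorem giK_d_apply (E : Type u) [AddCommGroup E] [Module R E] {i j : ℤ} (h : j + 1 = i)
    (x : E × E) : ((giK R E).d i j) x = ((x.2 : E), (0 : E)) := by
  rw [giK_d E h]
  rfl

/-- Every injective module is Gorenstein injective. -/
theorem gi_of_injective {E : Type u} [AddCommGroup E] [Module R E]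
    (hE : Module.Injective R E) : IsGorensteinInj R E := by
  refine ⟨giK R E, ⟨?_, ?_, ?_⟩, 0, ⟨?_⟩⟩
  · -- acyclic
    intro n x hx
    erw [giK_d_apply E (show (n-1)+1 = n by ring)] at hx
    refine ⟨((0 : E), (x.1 : E)), ?_⟩
    erw [giK_d_apply E rfl]
    have h2 : (x.2 : E) = 0 := congrArg Prod.fst hx
    exact Prod.ext rfl h2.symm
  · intro n
    exact inj_prod hE hE
  · intro F _ _ hF n f hf
    refine ⟨(((LinearMap.inr R E E).comp
      ((LinearMap.fst R E E).comp (f : F →ₗ[R] E × E)))), fun x => ?_⟩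
    erw [giK_d_apply E rfl]
    have h2 : ((f x : E × E)).2 = 0 := by
      have h3 := hf x
      erw [giK_d_apply E (show (n-1)+1 = n by ring)] at h3
      exact congrArg Prod.fst h3
    exact Prod.ext rfl h2.symm
  · -- E ≃ cycles (giK R E) 0
    have hmem : ∀ a : E, ((a, (0:E)) : E × E) ∈ cycles R (giK R E) 0 := by
      intro a
      show ((giK R E).d 0 (0-1)) ((a, (0:E)) : E × E) = 0
      erw [giK_d_apply E (show (0:ℤ)-1+1 = 0 by ring)]
      rfl
    refine LinearEquiv.ofBijective
      (LinearMap.codRestrict (cycles R (giK R E) 0) (LinearMap.inl R E E) hmem) ⟨?_, ?_⟩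
    · intro a b hab
      have h1 : ((a, (0:E)) : E × E) = (b, (0:E)) := Subtype.ext_iff.mp hab
      exact congrArg Prod.fst h1
    · rintro ⟨z, hz⟩
      have hz2 : (z : E × E).2 = 0 := by
        have h1 : ((giK R E).d 0 (0-1)) z = 0 := hz
        erw [giK_d_apply E (show (0:ℤ)-1+1 = 0 by ring)] at h1
        exact congrArg Prod.fst h1
      exact ⟨(z : E × E).1, Subtype.ext (Prod.ext rfl hz2.symm)⟩

end Core

section Lift

variable {R : Type u} [Ring R]

theorem ker_d_congr (C : Cx R) (i : ℤ) {j j' : ℤ} (h : j = j') :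
    LinearMap.ker (C.d i j).hom = LinearMap.ker (C.d i j').hom := by subst h; rfl

theorem cycles_succ_eq (C : Cx R) (n : ℤ) :
    cycles R C (n + 1) = LinearMap.ker (C.d (n + 1) n).hom :=
  ker_d_congr C (n + 1) (by ring)

/-- The corestriction `C_{n+1} → Z_n C` of the differential. -/
noncomputable def toCyc (C : Cx R) (n : ℤ) : C.X (n + 1) →ₗ[R] cycles R C n :=
  LinearMap.codRestrict (cycles R C n) (C.d (n + 1) n).hom (fun x => d_d C (n+1) n (n-1) x)

theorem toCyc_surj (C : Cx R) (hC : Acyclic R C) (n : ℤ) :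
    Function.Surjective (toCyc C n) := by
  rintro ⟨z, hz⟩
  obtain ⟨y, hy⟩ := hC n z hz
  exact ⟨y, Subtype.ext hy⟩

theorem ker_toCyc (C : Cx R) (n : ℤ) :
    LinearMap.ker (toCyc C n) = cycles R C (n + 1) := by
  rw [cycles_succ_eq]
  exact LinearMap.ker_codRestrict _ _ _

/-- Flatten the kernel of a composition with a submodule inclusion. -/
noncomputable def kerCompSubtypeEquiv {M N : Type u} [AddCommGroup M] [AddCommGroup N]
    [Module R M] [Module R N] (S : Submodule R M) (g : M →ₗ[R] N)
    (h : ∀ x, g x = 0 → x ∈ S) :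
    (LinearMap.ker (g.comp S.subtype)) ≃ₗ[R] LinearMap.ker g := by
  refine LinearEquiv.ofBijective
    (LinearMap.codRestrict (LinearMap.ker g)
      (S.subtype.comp (LinearMap.ker (g.comp S.subtype)).subtype) ?_) ⟨?_, ?_⟩
  · rintro ⟨⟨x, hxS⟩, hx⟩
    exact hx
  · intro a b hab
    rw [Subtype.ext_iff] at hab
    rw [Subtype.ext_iff, Subtype.ext_iff]
    exact hab
  · rintro ⟨x, hx⟩
    exact ⟨⟨⟨x, h x hx⟩, hx⟩, rfl⟩

/-- `A` has the lifting property: maps from injective modules lift along any surjection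
whose kernel is isomorphic to `A`. -/
def CanLift (R : Type u) [Ring R] (A : Type u) [AddCommGroup A] [Module R A] : Prop :=
  ∀ (J M Q : Type u) [AddCommGroup J] [Module R J] [AddCommGroup M] [Module R M]
    [AddCommGroup Q] [Module R Q], Module.Injective R J →
    ∀ (π : M →ₗ[R] Q), Function.Surjective π → Nonempty ((LinearMap.ker π) ≃ₗ[R] A) →
    ∀ f : J →ₗ[R] Q, ∃ g : J →ₗ[R] M, ∀ x, π (g x) = f x

theorem canLift_congr {A B : Type u} [AddCommGroup A] [AddCommGroup B] [Module R A]
    [Module R B] (e : A ≃ₗ[R] B) (h : CanLift R A) : CanLift R B := by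
  intro J M Q _ _ _ _ _ _ hJ π hπ ⟨e'⟩ f
  exact h J M Q hJ π hπ ⟨e'.trans e.symm⟩ f

/-- The key lemma: Gorenstein injective modules have the lifting property. -/
theorem canLift_of_GI {A : Type u} [AddCommGroup A] [Module R A]
    (hA : IsGorensteinInj R A) : CanLift R A := by
  obtain ⟨D, ⟨hDacyc, hDinj, hDta⟩, m, ⟨eA⟩⟩ := hA
  intro J M Q _ _ _ _ _ _ hJ π hπ ⟨e0⟩ f
  classical
  -- `c` identifies the kernel with a cycle module of `D`
  set c : (LinearMap.ker π) ≃ₗ[R] cycles R D m := e0.trans eA with hc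
  -- the pullback
  set P : Submodule R (M × J) :=
    LinearMap.ker (π.comp (LinearMap.fst R M J) - f.comp (LinearMap.snd R M J)) with hP
  have memP : ∀ p : M × J, p ∈ P ↔ π p.1 = f p.2 := by
    intro p
    simp [hP, sub_eq_zero]
  set proj2 : ↥P →ₗ[R] J := (LinearMap.snd R M J).comp P.subtype with hproj2def
  have hproj2 : Function.Surjective proj2 := by
    intro j
    obtain ⟨x, hx⟩ := hπ (f j)
    exact ⟨⟨(x, j), (memP (x, j)).mpr hx⟩, rfl⟩
  set K : Submodule R ↥P := LinearMap.ker proj2 with hK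
  -- K ≃ ker π
  have humem : ∀ z : ↥K, ((z : ↥P) : M × J).1 ∈ LinearMap.ker π := by
    rintro ⟨⟨p, hp⟩, hz⟩
    have h1 : p.2 = 0 := hz
    have h2 := (memP p).mp hp
    rw [h1, map_zero] at h2
    exact h2
  set u : ↥K →ₗ[R] LinearMap.ker π :=
    LinearMap.codRestrict (LinearMap.ker π)
      ((LinearMap.fst R M J).comp (P.subtype.comp K.subtype)) humem with hu
  have hubij : Function.Bijective u := by
    constructor
    · rintro ⟨⟨p, hp⟩, hz⟩ ⟨⟨q, hq⟩, hw⟩ hab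
      have h1 : p.1 = q.1 := Subtype.ext_iff.mp hab
      have h2 : p.2 = 0 := hz
      have h3 : q.2 = 0 := hw
      exact Subtype.ext (Subtype.ext (Prod.ext h1 (h2.trans h3.symm)))
    · rintro ⟨x, hx⟩
      have hmem : (x, (0:J)) ∈ P := (memP _).mpr (by simp [hx.out]; exact hx)
      exact ⟨⟨⟨(x, 0), hmem⟩, rfl⟩, rfl⟩
  set uE : ↥K ≃ₗ[R] LinearMap.ker π := LinearEquiv.ofBijective u hubij with huE
  -- extend the inclusion K → D.X m to all of P
  set ι : ↥K →ₗ[R] D.X m :=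
    (cycles R D m).subtype.comp ((c : LinearMap.ker π →ₗ[R] cycles R D m).comp
      (uE : ↥K →ₗ[R] LinearMap.ker π)) with hι
  obtain ⟨h, hh⟩ := (hDinj m).out (X := K) (Y := P) K.subtype (Submodule.injective_subtype K) ι
  -- factor d ∘ h through J
  set dh : ↥P →ₗ[R] D.X (m - 1) :=
    (show (D.X m : Type u) →ₗ[R] D.X (m-1) from (D.d m (m-1)).hom).comp h with hdh
  have hvan : ∀ p : ↥P, proj2 p = 0 → dh p = 0 := by
    intro p hp
    have h1 : p = K.subtype ⟨p, hp⟩ := rfl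
    have h2 : dh p = (D.d m (m-1)) (h (K.subtype ⟨p, hp⟩)) := by rw [← h1]; rfl
    rw [h2, hh]
    exact (c (uE ⟨p, hp⟩)).2
  obtain ⟨φ, hφ⟩ := factor_thru proj2 hproj2 dh hvan
  have hφ0 : ∀ x : J, (D.d (m-1) ((m-1)-1)) (φ x) = 0 := by
    intro x
    obtain ⟨p, rfl⟩ := hproj2 x
    rw [hφ p]
    exact d_d D m (m-1) (m-1-1) (h p)
  -- lift φ using total acyclicity
  have hψ0 := hDta J hJ (m-1) φ hφ0
  rw [show m - 1 + 1 = m by ring] at hψ0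
  obtain ⟨ψ, hψ⟩ := hψ0
  -- the retraction P → cycles D m
  have hr0 : ∀ p : ↥P, (h - ψ.comp proj2) p ∈ cycles R D m := by
    intro p
    show (D.d m (m-1)) (h p - ψ (proj2 p)) = 0
    rw [map_sub, hψ (proj2 p), hφ p]
    show dh p - dh p = 0
    exact sub_self _
  set r : ↥P →ₗ[R] cycles R D m :=
    LinearMap.codRestrict (cycles R D m) (h - ψ.comp proj2) hr0 with hr
  have hkey : ∀ z : ↥K, r (K.subtype z) = c (uE z) := by
    intro z
    refine Subtype.ext ?_
    show h (K.subtype z) - ψ (proj2 (K.subtype z)) = ((c (uE z) : cycles R D m) : D.X m)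
    have h1 : proj2 (K.subtype z) = 0 := z.2
    rw [h1, map_zero, sub_zero, hh]
    rfl
  -- the corrected section
  set t : ↥P →ₗ[R] ↥P := LinearMap.id - K.subtype.comp
    ((uE.symm : LinearMap.ker π →ₗ[R] ↥K).comp
      ((c.symm : cycles R D m →ₗ[R] LinearMap.ker π).comp r)) with ht
  have htvan : ∀ p : ↥P, proj2 p = 0 → t p = 0 := by
    intro p hp
    have h1 : p = K.subtype ⟨p, hp⟩ := rfl
    have h2 : r p = c (uE ⟨p, hp⟩) := hkey ⟨p, hp⟩
    show p - K.subtype (uE.symm (c.symm (r p))) = 0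
    rw [h2, LinearEquiv.symm_apply_apply, LinearEquiv.symm_apply_apply]
    exact sub_self p
  obtain ⟨s, hs⟩ := factor_thru proj2 hproj2 t htvan
  refine ⟨(LinearMap.fst R M J).comp (P.subtype.comp s), fun x => ?_⟩
  obtain ⟨p, rfl⟩ := hproj2 x
  show π (((s (proj2 p) : ↥P) : M × J)).1 = f (proj2 p)
  rw [hs p]
  have h3 : ((t p : ↥P) : M × J).1
      = ((p : M × J)).1 - ((K.subtype (uE.symm (c.symm (r p))) : ↥P) : M × J).1 := rfl
  rw [h3, map_sub]
  have h4 : π ((K.subtype (uE.symm (c.symm (r p))) : ↥P) : M × J).1 = 0 :=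
    humem (uE.symm (c.symm (r p)))
  rw [h4, sub_zero]
  exact (memP (p : M × J)).mp p.2

end Lift

section Ext

variable {R : Type u} [Ring R]

/-- The lifting property is closed under extensions. -/
theorem canLift_ext {B G : Type u} [AddCommGroup B] [AddCommGroup G] [Module R B]
    [Module R G] (p : B →ₗ[R] G) (hp : Function.Surjective p) (hG : CanLift R G)
    (hker : CanLift R (LinearMap.ker p)) : CanLift R B := by
  intro J M Q _ _ _ _ _ _ hJ π hπ ⟨e⟩ f
  classical
  set ι : (LinearMap.ker p) →ₗ[R] M := (LinearMap.ker π).subtype.comp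
    ((e.symm : B →ₗ[R] LinearMap.ker π).comp (LinearMap.ker p).subtype) with hι
  have hιinj : Function.Injective ι := by
    have h0 : Function.Injective ((LinearMap.ker π).subtype ∘ (e.symm) ∘
        (LinearMap.ker p).subtype) :=
      (Submodule.injective_subtype _).comp (e.symm.injective.comp
        (Submodule.injective_subtype _))
    exact fun a b hab => h0 hab
  set S : Submodule R M := LinearMap.range ι with hS
  have hSle : S ≤ LinearMap.ker π := by
    rintro x ⟨y, rfl⟩
    exact (e.symm ((LinearMap.ker p).subtype y)).2
  set π' : (M ⧸ S) →ₗ[R] Q := S.liftQ π hSle with hπ'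
  have hπ'mk : ∀ m : M, π' (S.mkQ m) = π m := fun m => rfl
  have hπ'surj : Function.Surjective π' := by
    intro q
    obtain ⟨m, hm⟩ := hπ q
    exact ⟨S.mkQ m, by rw [hπ'mk, hm]⟩
  set g0 : (LinearMap.ker π) →ₗ[R] G := p.comp (e : LinearMap.ker π →ₗ[R] B) with hg0
  have hg0surj : Function.Surjective g0 := by
    intro z
    obtain ⟨b, hb⟩ := hp z
    exact ⟨e.symm b, by simp [hg0, hb]⟩
  have hμmem : ∀ x : LinearMap.ker π, S.mkQ ((LinearMap.ker π).subtype x) ∈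
      LinearMap.ker π' := by
    intro x
    have h1 : π' (S.mkQ ((LinearMap.ker π).subtype x)) = π x.1 := hπ'mk _
    rw [LinearMap.mem_ker, h1]
    exact x.2
  set μ : (LinearMap.ker π) →ₗ[R] LinearMap.ker π' :=
    LinearMap.codRestrict _ (S.mkQ.comp (LinearMap.ker π).subtype) hμmem with hμ
  have hμsurj : Function.Surjective μ := by
    rintro ⟨z, hz⟩
    obtain ⟨m, rfl⟩ := S.mkQ_surjective z
    have hm : m ∈ LinearMap.ker π := by
      rw [LinearMap.mem_ker, ← hπ'mk m]
      exact hz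
    exact ⟨⟨m, hm⟩, rfl⟩
  have hkerμ : LinearMap.ker μ = LinearMap.ker g0 := by
    ext x
    constructor
    · intro hx
      have h1 : S.mkQ x.1 = 0 := Subtype.ext_iff.mp hx
      have h2 : x.1 ∈ S := (Submodule.Quotient.mk_eq_zero S).mp h1
      obtain ⟨y, hy⟩ := h2
      have h3 : (e.symm ((LinearMap.ker p).subtype y)) = x := Subtype.ext hy
      have h4 : (e : LinearMap.ker π →ₗ[R] B) x = (LinearMap.ker p).subtype y := by
        rw [← h3]; simp
      show p ((e : LinearMap.ker π →ₗ[R] B) x) = 0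
      rw [h4]
      exact y.2
    · intro hx
      have h1 : (e x : B) ∈ LinearMap.ker p := hx
      have h2 : x.1 ∈ S := ⟨⟨e x, h1⟩, by simp [hι]⟩
      have h3 : S.mkQ x.1 = 0 := (Submodule.Quotient.mk_eq_zero S).mpr h2
      show μ x = 0
      exact Subtype.ext h3
  have eG : Nonempty ((LinearMap.ker π') ≃ₗ[R] G) :=
    ⟨((LinearMap.quotKerEquivOfSurjective μ hμsurj).symm.trans
      (Submodule.quotEquivOfEq _ _ hkerμ)).trans
      (LinearMap.quotKerEquivOfSurjective g0 hg0surj)⟩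
  obtain ⟨h1, hh1⟩ := hG J (M ⧸ S) Q hJ π' hπ'surj eG f
  have eS : Nonempty ((LinearMap.ker S.mkQ) ≃ₗ[R] LinearMap.ker p) :=
    ⟨(LinearEquiv.ofEq _ _ (Submodule.ker_mkQ S)).trans
      (LinearEquiv.ofInjective ι hιinj).symm⟩
  obtain ⟨g, hg⟩ := hker J M (M ⧸ S) hJ S.mkQ (S.mkQ_surjective) eS h1
  refine ⟨g, fun x => ?_⟩
  rw [← hπ'mk (g x), hg x, hh1 x]

end Ext

section Backward

variable {R : Type u} [Ring R]

theorem backward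
    (hyp : ∀ C : Cx R, Acyclic R C → (∀ n : ℤ, IsGorensteinInj R (C.X n)) →
      ∀ n : ℤ, IsGorensteinInj R (cycles R C n)) :
    ∀ C : Cx R, Acyclic R C → (∀ n : ℤ, Module.Injective R (C.X n)) →
      TotallyAcyclicInj R C := by
  intro C hacyc hinj
  refine ⟨hacyc, hinj, ?_⟩
  intro E _ _ hE n f hf
  have hGIcyc : IsGorensteinInj R (cycles R C (n + 1)) :=
    hyp C hacyc (fun i => gi_of_injective (hinj i)) (n + 1)
  have hcl : CanLift R (cycles R C (n + 1)) := canLift_of_GI hGIcyc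
  have hkernel : Nonempty ((LinearMap.ker (toCyc C n)) ≃ₗ[R] cycles R C (n + 1)) :=
    ⟨LinearEquiv.ofEq _ _ (ker_toCyc C n)⟩
  obtain ⟨g, hg⟩ := hcl E (C.X (n + 1)) (cycles R C n) hE (toCyc C n)
    (toCyc_surj C hacyc n) hkernel (LinearMap.codRestrict _ f hf)
  refine ⟨g, fun x => ?_⟩
  have h1 := Subtype.ext_iff.mp (hg x)
  exact h1

end Backward

section Nice

variable {R : Type u} [Ring R]

/-- Kernel of a composition with an equivalence. -/
noncomputable def kerCompEquiv {A B G : Type u} [AddCommGroup A] [AddCommGroup B]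
    [AddCommGroup G] [Module R A] [Module R B] [Module R G] (e : A ≃ₗ[R] B)
    (p : B →ₗ[R] G) :
    (LinearMap.ker (p.comp (e : A →ₗ[R] B))) ≃ₗ[R] LinearMap.ker p := by
  refine LinearEquiv.ofBijective
    (LinearMap.codRestrict (LinearMap.ker p)
      ((e : A →ₗ[R] B).comp (LinearMap.ker (p.comp (e : A →ₗ[R] B))).subtype)
      (fun x => x.2) ) ⟨?_, ?_⟩
  · intro a b hab
    have h1 : e ((a : A)) = e ((b : A)) := Subtype.ext_iff.mp hab
    exact Subtype.ext (e.injective h1)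
  · rintro ⟨y, hy⟩
    refine ⟨⟨e.symm y, ?_⟩, ?_⟩
    · show p (e (e.symm y)) = 0
      rw [e.apply_symm_apply]
      exact hy
    · exact Subtype.ext (e.apply_symm_apply y)

/-- Iterated extensions of Gorenstein injectives. -/
def Nice (R : Type u) [Ring R] : ℕ → ModuleCat.{u} R → Prop
  | 0, A => IsGorensteinInj R A
  | (k+1), A => ∃ (G : ModuleCat.{u} R) (p : A →ₗ[R] G), IsGorensteinInj R G ∧
      Function.Surjective p ∧ Nice R k (ModuleCat.of R (LinearMap.ker p))

theorem nice_congr : ∀ (k : ℕ) (A B : ModuleCat.{u} R) (_ : (A : Type u) ≃ₗ[R] B),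
    Nice R k A → Nice R k B := by
  intro k
  induction k with
  | zero => exact fun A B e h => gi_congr e h
  | succ k ih =>
    rintro A B e ⟨G, p, hG, hp, hn⟩
    refine ⟨G, p.comp (e.symm : (B : Type u) →ₗ[R] A), hG,
      hp.comp e.symm.surjective, ?_⟩
    exact ih _ _ ((kerCompEquiv e.symm p).symm : (_ : Type u) ≃ₗ[R] _) hn

theorem gi_bot (A : Type u) [AddCommGroup A] [Module R A] :
    IsGorensteinInj R (LinearMap.ker (LinearMap.id (R := R) (M := A))) := by
  haveI : Subsingleton (LinearMap.ker (LinearMap.id (R := R) (M := A))) := by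
    constructor
    rintro ⟨a, ha⟩ ⟨b, hb⟩
    have ha' : a = 0 := ha
    have hb' : b = 0 := hb
    exact Subtype.ext (ha'.trans hb'.symm)
  exact gi_of_injective inj_subsingleton

theorem nice_succ : ∀ (k : ℕ) (A : ModuleCat.{u} R), Nice R k A → Nice R (k+1) A := by
  intro k
  induction k with
  | zero =>
    intro A hA
    exact ⟨A, LinearMap.id, hA, Function.surjective_id, gi_bot A⟩
  | succ k ih =>
    rintro A ⟨G, p, hG, hp, hn⟩
    exact ⟨G, p, hG, hp, ih _ hn⟩

theorem canLift_of_nice : ∀ (k : ℕ) (A : ModuleCat.{u} R), Nice R k A →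
    CanLift R A := by
  intro k
  induction k with
  | zero => exact fun A hA => canLift_of_GI hA
  | succ k ih =>
    rintro A ⟨G, p, hG, hp, hn⟩
    exact canLift_ext p hp (canLift_of_GI hG) (ih _ hn)

/-- A Gorenstein injective module is the quotient of an injective module with
Gorenstein injective kernel. -/
theorem gi_surj (A : Type u) [AddCommGroup A] [Module R A] (hA : IsGorensteinInj R A) :
    ∃ (J : ModuleCat.{u} R) (π : (J : Type u) →ₗ[R] A), Module.Injective R J ∧
      Function.Surjective π ∧ IsGorensteinInj R (LinearMap.ker π) := by
  obtain ⟨D, ⟨hDacyc, hDinj, hDta⟩, r, ⟨eA⟩⟩ := hA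
  refine ⟨D.X (r+1), (eA.symm : cycles R D r →ₗ[R] A).comp (toCyc D r), hDinj (r+1),
    (eA.symm.surjective.comp (toCyc_surj D hDacyc r)), ?_⟩
  have hker : LinearMap.ker ((eA.symm : cycles R D r →ₗ[R] A).comp (toCyc D r)) =
      LinearMap.ker (toCyc D r) := by
    ext x
    constructor
    · intro hx
      have h1 : eA.symm (toCyc D r x) = 0 := hx
      have h2 := congrArg eA h1
      rw [eA.apply_symm_apply, map_zero] at h2
      exact h2
    · intro hx
      show eA.symm (toCyc D r x) = 0
      have h1 : toCyc D r x = 0 := hx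
      rw [h1, map_zero]
  refine ⟨D, ⟨hDacyc, hDinj, hDta⟩, r+1, ⟨?_⟩⟩
  exact (LinearEquiv.ofEq _ _ (hker.trans (ker_toCyc D r)))

/-- Glueing two surjections. -/
theorem glue {A C JB J1 : Type u} [AddCommGroup A] [AddCommGroup C] [AddCommGroup JB]
    [AddCommGroup J1] [Module R A] [Module R C] [Module R JB] [Module R J1]
    (p : A →ₗ[R] C) (φ : J1 →ₗ[R] A) (hq : Function.Surjective (p.comp φ))
    (πB : JB →ₗ[R] LinearMap.ker p) (hπB : Function.Surjective πB) :
    ∃ f : (JB × J1) →ₗ[R] A, Function.Surjective f ∧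
      ∃ w : (LinearMap.ker f) →ₗ[R] (LinearMap.ker (p.comp φ)),
        Function.Surjective w ∧
          Nonempty ((LinearMap.ker w) ≃ₗ[R] LinearMap.ker πB) := by
  classical
  set f : (JB × J1) →ₗ[R] A := ((LinearMap.ker p).subtype.comp πB).comp
    (LinearMap.fst R JB J1) + φ.comp (LinearMap.snd R JB J1) with hf
  have hfapp : ∀ z : JB × J1, f z = (πB z.1 : A) + φ z.2 := fun z => rfl
  have hfsurj : Function.Surjective f := by
    intro x
    obtain ⟨c, hc⟩ := hq (p x)
    have hmem : x - φ c ∈ LinearMap.ker p := by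
      rw [LinearMap.mem_ker, map_sub]
      have h1 : p (φ c) = p x := hc
      rw [h1, sub_self]
    obtain ⟨b, hb⟩ := hπB ⟨x - φ c, hmem⟩
    refine ⟨(b, c), ?_⟩
    rw [hfapp, hb]
    show (x - φ c) + φ c = x
    abel
  have hwmem : ∀ z : LinearMap.ker f, (z : JB × J1).2 ∈ LinearMap.ker (p.comp φ) := by
    rintro ⟨z, hz⟩
    have h1 : (πB z.1 : A) + φ z.2 = 0 := hz
    show p (φ z.2) = 0
    have h2 : φ z.2 = -(πB z.1 : A) := by
      rw [eq_neg_iff_add_eq_zero, add_comm]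
      exact h1
    rw [h2, map_neg, (πB z.1).2, neg_zero]
  set w : (LinearMap.ker f) →ₗ[R] (LinearMap.ker (p.comp φ)) :=
    LinearMap.codRestrict _ ((LinearMap.snd R JB J1).comp (LinearMap.ker f).subtype)
      hwmem with hw
  have hwsurj : Function.Surjective w := by
    rintro ⟨c, hc⟩
    have hmem : -φ c ∈ LinearMap.ker p := by
      rw [LinearMap.mem_ker, map_neg]
      have : p (φ c) = 0 := hc
      rw [this, neg_zero]
    obtain ⟨b, hb⟩ := hπB ⟨-φ c, hmem⟩
    have hbc : (b, c) ∈ LinearMap.ker f := by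
      rw [LinearMap.mem_ker, hfapp, hb]
      show -φ c + φ c = 0
      abel
    exact ⟨⟨(b, c), hbc⟩, rfl⟩
  refine ⟨f, hfsurj, w, hwsurj, ⟨?_⟩⟩
  have hkwmem : ∀ z : LinearMap.ker w, ((z : LinearMap.ker f) : JB × J1).1 ∈
      LinearMap.ker πB := by
    rintro ⟨⟨z, hz⟩, hz2⟩
    have h1 : z.2 = 0 := Subtype.ext_iff.mp hz2
    have h2 : (πB z.1 : A) + φ z.2 = 0 := hz
    rw [h1, map_zero, add_zero] at h2
    exact Subtype.ext h2
  refine LinearEquiv.ofBijective (LinearMap.codRestrict _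
    ((LinearMap.fst R JB J1).comp ((LinearMap.ker f).subtype.comp
      (LinearMap.ker w).subtype)) hkwmem) ⟨?_, ?_⟩
  · rintro ⟨⟨z, hz⟩, hz2⟩ ⟨⟨z', hz'⟩, hz2'⟩ hab
    have h1 : z.1 = z'.1 := Subtype.ext_iff.mp hab
    have h2 : z.2 = 0 := Subtype.ext_iff.mp hz2
    have h2' : z'.2 = 0 := Subtype.ext_iff.mp hz2'
    exact Subtype.ext (Subtype.ext (Prod.ext h1 (h2.trans h2'.symm)))
  · rintro ⟨b, hb⟩
    have hbf : ((b, (0:J1)) : JB × J1) ∈ LinearMap.ker f := by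
      rw [LinearMap.mem_ker, hfapp]
      show (πB b : A) + φ 0 = 0
      have h1 : πB b = 0 := hb
      rw [h1, map_zero]
      show (0 : A) + 0 = 0
      rw [add_zero]
    have hbw : (⟨(b, 0), hbf⟩ : LinearMap.ker f) ∈ LinearMap.ker w := by
      refine Subtype.ext ?_
      show ((b, (0:J1)) : JB × J1).2 = 0
      rfl
    exact ⟨⟨⟨(b, 0), hbf⟩, hbw⟩, rfl⟩

end Nice

section Steps

variable {R : Type u} [Ring R]

theorem nice_step : ∀ (k : ℕ) (A : ModuleCat.{u} R), Nice R k A →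
    ∃ (J : ModuleCat.{u} R) (π : (J : Type u) →ₗ[R] A), Module.Injective R J ∧
      Function.Surjective π ∧ Nice R (k+1) (ModuleCat.of R (LinearMap.ker π)) := by
  intro k
  induction k with
  | zero =>
    intro A hA
    obtain ⟨J, π, hJ, hπ, hker⟩ := gi_surj A hA
    exact ⟨J, π, hJ, hπ, nice_succ 0 _ hker⟩
  | succ k ih =>
    rintro A ⟨G, p, hG, hp, hn⟩
    obtain ⟨JB, πB, hJB, hπB, hNB⟩ := ih _ hn
    obtain ⟨J1, π1, hJ1, hπ1, hkerGI⟩ := gi_surj (G : Type u) hG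
    obtain ⟨φ, hφ⟩ := (canLift_of_nice k _ hn) J1 A G hJ1 p hp
      ⟨LinearEquiv.refl R _⟩ π1
    have hq : Function.Surjective (p.comp φ) := by
      intro z
      obtain ⟨x, hx⟩ := hπ1 z
      exact ⟨x, by show p (φ x) = z; rw [hφ x, hx]⟩
    obtain ⟨f, hfsurj, w, hwsurj, ⟨ew⟩⟩ := glue p φ hq πB hπB
    have hpφ : p.comp φ = π1 := LinearMap.ext hφ
    have hGIk : IsGorensteinInj R (LinearMap.ker (p.comp φ)) := by
      rw [hpφ]; exact hkerGI
    refine ⟨ModuleCat.of R (Prod.{u,u} (JB : Type u) (J1 : Type u)), f, inj_prod hJB hJ1,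
      hfsurj, ?_⟩
    exact ⟨ModuleCat.of R (LinearMap.ker (p.comp φ)), w, hGIk, hwsurj,
      nice_congr (k+1) _ _ (ew.symm) hNB⟩

variable (R) in
/-- `A` is an extension of a cycle of `X` by a `Nice` module. -/
def CData (X : Cx R) (k : ℕ) (A : ModuleCat.{u} R) : Prop :=
  ∃ (m : ℤ) (p : (A : Type u) →ₗ[R] cycles R X m), Function.Surjective p ∧
    Nice R k (ModuleCat.of R (LinearMap.ker p))

theorem cdata_zero (X : Cx R) (n : ℤ) :
    CData R X 0 (ModuleCat.of R (cycles R X n)) :=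
  ⟨n, LinearMap.id, Function.surjective_id, gi_bot _⟩

theorem cdata_step (X : Cx R) (hX : Acyclic R X)
    (hGI : ∀ i : ℤ, IsGorensteinInj R (X.X i)) (k : ℕ) (A : ModuleCat.{u} R)
    (h : CData R X k A) :
    ∃ (J : ModuleCat.{u} R) (π : (J : Type u) →ₗ[R] A), Module.Injective R J ∧
      Function.Surjective π ∧ CData R X (k+2) (ModuleCat.of R (LinearMap.ker π)) := by
  obtain ⟨m, p, hp, hn⟩ := h
  obtain ⟨JB, πB, hJB, hπB, hNB⟩ := nice_step k _ hn
  obtain ⟨J1, q1, hJ1, hq1, hkerGI⟩ := gi_surj (X.X (m+1) : Type u) (hGI (m+1))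
  set q : (J1 : Type u) →ₗ[R] cycles R X m := (toCyc X m).comp q1 with hqdef
  have hqsurj : Function.Surjective q := (toCyc_surj X hX m).comp hq1
  obtain ⟨φ, hφ⟩ := (canLift_of_nice k _ hn) J1 A (cycles R X m) hJ1 p hp
    ⟨LinearEquiv.refl R _⟩ q
  have hq' : Function.Surjective (p.comp φ) := by
    intro z
    obtain ⟨x, hx⟩ := hqsurj z
    exact ⟨x, by show p (φ x) = z; rw [hφ x, hx]⟩
  obtain ⟨f, hfsurj, w, hwsurj, ⟨ew⟩⟩ := glue p φ hq' πB hπB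
  have hpφ : p.comp φ = q := LinearMap.ext hφ
  set e2 : (LinearMap.ker (p.comp φ) : Type u) ≃ₗ[R] LinearMap.ker q :=
    LinearEquiv.ofEq _ _ (by rw [hpφ]) with he2
  -- u : ker q → cycles X (m+1)
  have humem : ∀ z : LinearMap.ker q, q1 ((z : (J1 : Type u))) ∈ cycles R X (m+1) := by
    rintro ⟨z, hz⟩
    rw [cycles_succ_eq]
    show X.d (m+1) m (q1 z) = 0
    exact Subtype.ext_iff.mp hz
  set uu : (LinearMap.ker q : Type u) →ₗ[R] cycles R X (m+1) :=
    LinearMap.codRestrict _ (q1.comp (LinearMap.ker q).subtype) humem with huu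
  have husurj : Function.Surjective uu := by
    rintro ⟨z, hz⟩
    obtain ⟨c, hc⟩ := hq1 z
    have hzd : X.d (m+1) m z = 0 := by
      rw [cycles_succ_eq] at hz
      exact hz
    have hcq : c ∈ LinearMap.ker q := by
      show (toCyc X m) (q1 c) = 0
      refine Subtype.ext ?_
      show X.d (m+1) m (q1 c) = 0
      rw [hc]
      exact hzd
    exact ⟨⟨c, hcq⟩, Subtype.ext hc⟩
  have hkeruu : Nonempty ((LinearMap.ker uu : Type u) ≃ₗ[R] LinearMap.ker q1) := by
    have h1 : LinearMap.ker uu = LinearMap.ker (q1.comp (LinearMap.ker q).subtype) :=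
      LinearMap.ker_codRestrict _ _ _
    refine ⟨(LinearEquiv.ofEq _ _ h1).trans (kerCompSubtypeEquiv _ q1 ?_)⟩
    intro x hx
    show (toCyc X m) (q1 x) = 0
    refine Subtype.ext ?_
    show X.d (m+1) m (q1 x) = 0
    rw [hx, map_zero]
  -- assemble
  set p' : (LinearMap.ker f : Type u) →ₗ[R] cycles R X (m+1) :=
    uu.comp ((e2 : (LinearMap.ker (p.comp φ) : Type u) →ₗ[R] LinearMap.ker q).comp w)
    with hp'
  have hp'surj : Function.Surjective p' :=
    husurj.comp (e2.surjective.comp hwsurj)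
  -- kernel of p'
  have hwmem' : ∀ z : LinearMap.ker p',
      e2 (w ((z : (LinearMap.ker f : Type u)))) ∈ LinearMap.ker uu := by
    rintro ⟨z, hz⟩
    exact hz
  set w' : (LinearMap.ker p' : Type u) →ₗ[R] LinearMap.ker uu :=
    LinearMap.codRestrict _
      (((e2 : (LinearMap.ker (p.comp φ) : Type u) →ₗ[R] LinearMap.ker q).comp w).comp
        (LinearMap.ker p').subtype) hwmem' with hw'
  have hw'surj : Function.Surjective w' := by
    rintro ⟨y, hy⟩
    obtain ⟨x, hx⟩ := hwsurj (e2.symm y)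
    have hxmem : x ∈ LinearMap.ker p' := by
      show uu (e2 (w x)) = 0
      rw [hx, e2.apply_symm_apply]
      exact hy
    refine ⟨⟨x, hxmem⟩, Subtype.ext ?_⟩
    show e2 (w x) = y
    rw [hx, e2.apply_symm_apply]
  have hkerw' : Nonempty ((LinearMap.ker w' : Type u) ≃ₗ[R] LinearMap.ker πB) := by
    have h1 : LinearMap.ker w' = LinearMap.ker ((((e2 : (LinearMap.ker (p.comp φ) :
        Type u) →ₗ[R] LinearMap.ker q).comp w)).comp (LinearMap.ker p').subtype) :=
      LinearMap.ker_codRestrict _ _ _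
    have h2 : ∀ x, ((e2 : (LinearMap.ker (p.comp φ) : Type u) →ₗ[R]
        LinearMap.ker q).comp w) x = 0 → x ∈ LinearMap.ker p' := by
      intro x hx
      show uu (e2 (w x)) = 0
      have h3 : e2 (w x) = 0 := hx
      rw [h3, map_zero]
    have h4 : LinearMap.ker ((e2 : (LinearMap.ker (p.comp φ) : Type u) →ₗ[R]
        LinearMap.ker q).comp w) = LinearMap.ker w := by
      ext z
      constructor
      · intro hz
        have h5 : e2 (w z) = 0 := hz
        have h6 := congrArg e2.symm h5
        rw [e2.symm_apply_apply, map_zero] at h6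
        exact h6
      · intro hz
        show e2 (w z) = 0
        have h5 : w z = 0 := hz
        rw [h5, map_zero]
    exact ⟨((LinearEquiv.ofEq _ _ h1).trans (kerCompSubtypeEquiv _ _ h2)).trans
      ((LinearEquiv.ofEq _ _ h4).trans ew)⟩
  refine ⟨ModuleCat.of R (Prod.{u,u} (JB : Type u) (J1 : Type u)), f, inj_prod hJB hJ1,
    hfsurj, m+1, p', hp'surj, ?_⟩
  -- Nice (k+2) (ker p')
  obtain ⟨ekw⟩ := hkerw'
  obtain ⟨ekuu⟩ := hkeruu
  exact ⟨ModuleCat.of R (LinearMap.ker uu), w', gi_congr ekuu.symm hkerGI, hw'surj,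
    nice_congr (k+1) _ _ ekw.symm hNB⟩

end Steps

section Cores

variable {R : Type u} [Ring R]

noncomputable def coresStep (M : ModuleCat.{u} R) : ModuleCat.{u} R :=
  ModuleCat.of R
    (↥(Injective.under M) ⧸
      LinearMap.range (show (M : Type u) →ₗ[R] ↥(Injective.under M) from (Injective.ι M).hom))

/-- The modules in an injective coresolution. -/
noncomputable def cores (Z : ModuleCat.{u} R) : ℕ → ModuleCat.{u} R
  | 0 => Z
  | (k+1) => coresStep (cores Z k)

/-- The injective modules in the coresolution. -/
noncomputable def coresI (Z : ModuleCat.{u} R) (k : ℕ) : ModuleCat.{u} R :=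
  Injective.under (cores Z k)

noncomputable def coresEmb (Z : ModuleCat.{u} R) (k : ℕ) :
    (cores Z k : Type u) →ₗ[R] coresI Z k :=
  (Injective.ι (cores Z k)).hom

theorem coresEmb_inj (Z : ModuleCat.{u} R) (k : ℕ) :
    Function.Injective (coresEmb Z k) :=
  (ModuleCat.mono_iff_injective (Injective.ι (cores Z k))).mp inferInstance

theorem coresI_inj (Z : ModuleCat.{u} R) (k : ℕ) :
    Module.Injective R (coresI Z k) := by
  have h : CategoryTheory.Injective (ModuleCat.of R ((coresI Z k : Type u))) :=
    Injective.injective_under (cores Z k)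
  exact @Module.injective_module_of_injective_object R _ _ _ _ h

/-- The differential of the coresolution. -/
noncomputable def coresD (Z : ModuleCat.{u} R) (k : ℕ) :
    (coresI Z k : Type u) →ₗ[R] coresI Z (k+1) :=
  (coresEmb Z (k+1)).comp
    (show (coresI Z k : Type u) →ₗ[R] (cores Z (k+1) : Type u) from
      (LinearMap.range (coresEmb Z k)).mkQ)

theorem coresD_app (Z : ModuleCat.{u} R) (k : ℕ) (x : (coresI Z k : Type u)) :
    coresD Z k x = coresEmb Z (k+1)
      (show (cores Z (k+1) : Type u) from (LinearMap.range (coresEmb Z k)).mkQ x) :=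
  rfl

theorem coresD_ker (Z : ModuleCat.{u} R) (k : ℕ) (x : (coresI Z k : Type u)) :
    coresD Z k x = 0 ↔ x ∈ LinearMap.range (coresEmb Z k) := by
  rw [coresD_app]
  constructor
  · intro h1
    have h2 : (show (cores Z (k+1) : Type u) from
        (LinearMap.range (coresEmb Z k)).mkQ x) = 0 := by
      apply coresEmb_inj Z (k+1)
      rw [h1, map_zero]
    exact (Submodule.Quotient.mk_eq_zero _).mp h2
  · intro hx
    have h2 : (LinearMap.range (coresEmb Z k)).mkQ x = 0 :=
      (Submodule.Quotient.mk_eq_zero _).mpr hx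
    show coresEmb Z (k+1) ((LinearMap.range (coresEmb Z k)).mkQ x) = 0
    rw [h2]
    exact map_zero (coresEmb Z (k+1))

theorem coresD_exact (Z : ModuleCat.{u} R) (k : ℕ) (x : (coresI Z (k+1) : Type u))
    (hx : coresD Z (k+1) x = 0) : ∃ y : (coresI Z k : Type u), coresD Z k y = x := by
  rw [coresD_ker] at hx
  obtain ⟨z, hz⟩ := hx
  obtain ⟨y, hy⟩ := (LinearMap.range (coresEmb Z k)).mkQ_surjective
    (show ((coresI Z k : Type u) ⧸ LinearMap.range (coresEmb Z k)) from z)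
  refine ⟨y, ?_⟩
  rw [coresD_app]
  show coresEmb Z (k+1) _ = x
  rw [hy]
  exact hz

theorem coresD_comp (Z : ModuleCat.{u} R) (k : ℕ) (x : (coresI Z k : Type u)) :
    coresD Z (k+1) (coresD Z k x) = 0 := by
  rw [coresD_ker]
  exact ⟨(show (cores Z (k+1) : Type u) from (LinearMap.range (coresEmb Z k)).mkQ x),
    rfl⟩

end Cores

section LChain

variable {R : Type u} [Ring R]

variable (R) in
structure LStage (X : Cx R) where
  A : ModuleCat.{u} R
  k : ℕ
  good : CData R X k A

noncomputable def lnext {X : Cx R} (hX : Acyclic R X)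
    (hGI : ∀ i : ℤ, IsGorensteinInj R (X.X i)) (L : LStage R X) :
    Σ' (J : ModuleCat.{u} R) (π : (J : Type u) →ₗ[R] L.A),
      Module.Injective R J ∧ Function.Surjective π ∧
        CData R X (L.k+2) (ModuleCat.of R (LinearMap.ker π)) :=
  Classical.choice (by
    obtain ⟨J, π, h1, h2, h3⟩ := cdata_step X hX hGI L.k L.A L.good
    exact ⟨⟨J, π, h1, h2, h3⟩⟩)

noncomputable def lchain {X : Cx R} (hX : Acyclic R X)
    (hGI : ∀ i : ℤ, IsGorensteinInj R (X.X i)) (n : ℤ) : ℕ → LStage R X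
  | 0 => ⟨ModuleCat.of R (cycles R X n), 0, cdata_zero X n⟩
  | (j+1) =>
    ⟨ModuleCat.of R (LinearMap.ker (lnext hX hGI (lchain hX hGI n j)).2.1),
      (lchain hX hGI n j).k + 2,
      (lnext hX hGI (lchain hX hGI n j)).2.2.2.2⟩

variable {X : Cx R} (hX : Acyclic R X) (hGI : ∀ i : ℤ, IsGorensteinInj R (X.X i)) (n : ℤ)

noncomputable def lJ (j : ℕ) : ModuleCat.{u} R :=
  (lnext hX hGI (lchain hX hGI n j)).1

noncomputable def lπ (j : ℕ) :
    ((lJ hX hGI n j : Type u)) →ₗ[R] ((lchain hX hGI n j).A : Type u) :=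
  (lnext hX hGI (lchain hX hGI n j)).2.1

theorem lJ_inj (j : ℕ) : Module.Injective R (lJ hX hGI n j) :=
  (lnext hX hGI (lchain hX hGI n j)).2.2.1

theorem lπ_surj (j : ℕ) : Function.Surjective (lπ hX hGI n j) :=
  (lnext hX hGI (lchain hX hGI n j)).2.2.2.1

/-- The differential `lJ (j+1) → lJ j` of the left resolution. -/
noncomputable def lD (j : ℕ) : ((lJ hX hGI n (j+1) : Type u)) →ₗ[R] lJ hX hGI n j :=
  (LinearMap.ker (lπ hX hGI n j)).subtype.comp
    (show ((lJ hX hGI n (j+1) : Type u)) →ₗ[R] LinearMap.ker (lπ hX hGI n j) from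
      lπ hX hGI n (j+1))

/-- The augmentation `lJ 0 → cycles X n`. -/
noncomputable def lD0 : ((lJ hX hGI n 0 : Type u)) →ₗ[R] cycles R X n :=
  show ((lJ hX hGI n 0 : Type u)) →ₗ[R] cycles R X n from lπ hX hGI n 0

theorem lD0_surj : Function.Surjective (lD0 hX hGI n) := lπ_surj hX hGI n 0

theorem lD_exact0 (x : (lJ hX hGI n 0 : Type u)) (hx : lD0 hX hGI n x = 0) :
    ∃ y : (lJ hX hGI n 1 : Type u), lD hX hGI n 0 y = x := by
  have hmem : x ∈ LinearMap.ker (lπ hX hGI n 0) := LinearMap.mem_ker.mpr hx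
  obtain ⟨y, hy⟩ := lπ_surj hX hGI n 1
    (show ((lchain hX hGI n 1).A : Type u) from ⟨x, hmem⟩)
  refine ⟨y, ?_⟩
  exact congrArg (fun z : LinearMap.ker (lπ hX hGI n 0) =>
    (z : (lJ hX hGI n 0 : Type u))) hy

theorem lD_exact (j : ℕ) (x : (lJ hX hGI n (j+1) : Type u))
    (hx : lD hX hGI n j x = 0) :
    ∃ y : (lJ hX hGI n (j+2) : Type u), lD hX hGI n (j+1) y = x := by
  have hmem : x ∈ LinearMap.ker (lπ hX hGI n (j+1)) :=
    LinearMap.mem_ker.mpr (Subtype.ext hx)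
  obtain ⟨y, hy⟩ := lπ_surj hX hGI n (j+2)
    (show ((lchain hX hGI n (j+2)).A : Type u) from ⟨x, hmem⟩)
  refine ⟨y, ?_⟩
  exact congrArg (fun z : LinearMap.ker (lπ hX hGI n (j+1)) =>
    (z : (lJ hX hGI n (j+1) : Type u))) hy

theorem lD_comp0 (y : (lJ hX hGI n 1 : Type u)) : lD0 hX hGI n (lD hX hGI n 0 y) = 0 :=
  (show (LinearMap.ker (lπ hX hGI n 0) : Type u) from lπ hX hGI n 1 y).2

theorem lD_comp (j : ℕ) (y : (lJ hX hGI n (j+2) : Type u)) :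
    lD hX hGI n j (lD hX hGI n (j+1) y) = 0 := by
  have h1 : lπ hX hGI n (j+1) (lD hX hGI n (j+1) y) = 0 :=
    (show (LinearMap.ker (lπ hX hGI n (j+1)) : Type u) from lπ hX hGI n (j+2) y).2
  show (LinearMap.ker (lπ hX hGI n j)).subtype
    (lπ hX hGI n (j+1) (lD hX hGI n (j+1) y)) = 0
  rw [h1]
  exact map_zero _

end LChain

section Assemble

variable {R : Type u} [Ring R]
variable {X : Cx R} (hX : Acyclic R X) (hGI : ∀ i : ℤ, IsGorensteinInj R (X.X i)) (n : ℤ)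

variable (X) in
noncomputable def ZM : ModuleCat.{u} R := ModuleCat.of R (cycles R X n)

/-- The components of the big complex. -/
noncomputable def XW : ℤ → ModuleCat.{u} R
  | .ofNat 0 => coresI (ZM X n) 0
  | .ofNat (l+1) => lJ hX hGI n l
  | .negSucc l => coresI (ZM X n) (l+1)

/-- The differentials of the big complex. -/
noncomputable def dW : ∀ j : ℤ, XW hX hGI n (j + 1) ⟶ XW hX hGI n j
  | .ofNat 0 => ModuleCat.ofHom ((coresEmb (ZM X n) 0).comp (lD0 hX hGI n))
  | .ofNat (l+1) => ModuleCat.ofHom (lD hX hGI n l)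
  | .negSucc 0 => ModuleCat.ofHom (coresD (ZM X n) 0)
  | .negSucc (l+1) => ModuleCat.ofHom (coresD (ZM X n) (l+1))

theorem wW : ∀ j : ℤ, dW hX hGI n (j + 1) ≫ dW hX hGI n j = 0 := by
  intro j
  cases j with
  | ofNat l =>
    cases l with
    | zero =>
      ext x
      show coresEmb (ZM X n) 0 (lD0 hX hGI n (lD hX hGI n 0 x)) = 0
      exact (congrArg (coresEmb (ZM X n) 0) (lD_comp0 hX hGI n x)).trans (map_zero _)
    | succ l =>
      ext x
      show (LinearMap.ker (lπ hX hGI n l)).subtype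
        (lπ hX hGI n (l+1) (lD hX hGI n (l+1) x)) = 0
      exact lD_comp hX hGI n l x
  | negSucc l =>
    cases l with
    | zero =>
      ext x
      show coresD (ZM X n) 0 (coresEmb (ZM X n) 0 (lD0 hX hGI n x)) = 0
      exact (coresD_ker _ 0 _).mpr ⟨lD0 hX hGI n x, rfl⟩
    | succ l =>
      cases l with
      | zero =>
        ext x
        show coresD (ZM X n) 1 (coresD (ZM X n) 0 x) = 0
        exact coresD_comp _ 0 x
      | succ l =>
        ext x
        show coresD (ZM X n) (l+2) (coresD (ZM X n) (l+1) x) = 0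
        exact coresD_comp _ (l+1) x

/-- The big acyclic complex of injectives with `cycles X n` as a cycle. -/
noncomputable def Wcx : Cx R := mkCx (XW hX hGI n) (dW hX hGI n) (wW hX hGI n)

theorem Wcx_d (j : ℤ) : (Wcx hX hGI n).d (j+1) j = dW hX hGI n j :=
  mkCx_d _ _ _ j

theorem Wcx_inj (i : ℤ) : Module.Injective R ((Wcx hX hGI n).X i) := by
  cases i with
  | ofNat l =>
    cases l with
    | zero => exact coresI_inj (ZM X n) 0
    | succ l => exact lJ_inj hX hGI n l
  | negSucc l => exact coresI_inj (ZM X n) (l+1)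

theorem Wcx_acyclic : Acyclic R (Wcx hX hGI n) := by
  intro i x hx
  obtain ⟨m, rfl⟩ : ∃ m : ℤ, i = m + 1 := ⟨i - 1, by ring⟩
  have hx0 : x ∈ LinearMap.ker ((Wcx hX hGI n).d (m+1) (m+1-1)).hom := hx
  rw [ker_d_congr (Wcx hX hGI n) (m+1) (show m+1-1 = m by ring)] at hx0
  have hx' : dW hX hGI n m x = 0 := by
    rw [← Wcx_d hX hGI n m]
    exact hx0
  rw [show (Wcx hX hGI n).d (m+1+1) (m+1) = dW hX hGI n (m+1) from Wcx_d hX hGI n (m+1)]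
  clear hx hx0
  cases m with
  | ofNat l =>
    cases l with
    | zero =>
      have h2 : lD0 hX hGI n x = 0 :=
        coresEmb_inj (ZM X n) 0 (by exact hx'.trans (map_zero (coresEmb (ZM X n) 0)).symm)
      obtain ⟨y, hy⟩ := lD_exact0 hX hGI n x h2
      exact ⟨y, hy⟩
    | succ l =>
      have h2 : lD hX hGI n l x = 0 := hx'
      obtain ⟨y, hy⟩ := lD_exact hX hGI n l x h2
      exact ⟨y, hy⟩
  | negSucc l =>
    cases l with
    | zero =>
      have h2 : coresD (ZM X n) 0 x = 0 := hx'
      obtain ⟨z, hz⟩ := (coresD_ker (ZM X n) 0 x).mp h2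
      obtain ⟨y, hy⟩ := lD0_surj hX hGI n (show ((ZM X n : Type u)) from z)
      refine ⟨y, ?_⟩
      show coresEmb (ZM X n) 0 (lD0 hX hGI n y) = x
      rw [hy]
      exact hz
    | succ l =>
      have h2 : coresD (ZM X n) (l+1) x = 0 := hx'
      obtain ⟨y, hy⟩ := coresD_exact (ZM X n) l x h2
      cases l with
      | zero => exact ⟨y, hy⟩
      | succ l => exact ⟨y, hy⟩

theorem Wcx_cycle :
    Nonempty ((cycles R X n : Type u) ≃ₗ[R] cycles R (Wcx hX hGI n) 0) := by
  have hW0 : cycles R (Wcx hX hGI n) 0 = LinearMap.ker (dW hX hGI n (-1)).hom := by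
    refine (ker_d_congr (Wcx hX hGI n) 0 (show (0:ℤ)-1 = -1 by norm_num)).trans ?_
    have h2 : (Wcx hX hGI n).d 0 (-1) = dW hX hGI n (-1) := Wcx_d hX hGI n (-1)
    rw [h2]
    rfl
  have hW0' : LinearMap.ker (dW hX hGI n (-1)).hom =
      LinearMap.range (coresEmb (ZM X n) 0) := by
    ext x
    exact coresD_ker (ZM X n) 0 x
  exact ⟨(LinearEquiv.ofInjective (coresEmb (ZM X n) 0)
    (coresEmb_inj (ZM X n) 0)).trans
    (LinearEquiv.ofEq _ _ (hW0'.symm.trans hW0.symm))⟩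

theorem forward
    (hyp : ∀ C : Cx R, Acyclic R C → (∀ i : ℤ, Module.Injective R (C.X i)) →
      TotallyAcyclicInj R C) :
    ∀ C : Cx R, Acyclic R C → (∀ i : ℤ, IsGorensteinInj R (C.X i)) →
      ∀ n : ℤ, IsGorensteinInj R (cycles R C n) := by
  intro X hX hGI n
  exact ⟨Wcx hX hGI n, hyp _ (Wcx_acyclic hX hGI n) (Wcx_inj hX hGI n), 0,
    Wcx_cycle hX hGI n⟩

end Assemble

theorem statement3 (R : Type u) [Ring R] :
    (∀ C : Cx R, Acyclic R C → (∀ n : ℤ, Module.Injective R (C.X n)) →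
        TotallyAcyclicInj R C) ↔
      (∀ C : Cx R, Acyclic R C → (∀ n : ℤ, IsGorensteinInj R (C.X n)) →
        ∀ n : ℤ, IsGorensteinInj R (cycles R C n)) := by
  constructor
  · exact fun h => forward h
  · exact fun h => backward h

end TotallyAcyclicPaper
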